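/- If ρ < 1, then Σ_{n=0}^∞ min(n, N)·π(n) converges and equals (λ/μ)·Σ_{n=0}^∞ π(n). Equivalently, under the normalized stationary distribution the expected number of busy servers is λ/μ, and the expected number of idle servers is N − λ/μ. -/

import Mathlib

/-- If `ρ < 1`, then `Σ_{n=0}^∞ min(n, N)·π(n)` converges and equals `(λ/μ)·Σ_n π(n)`:
under the normalized stationary distribution the expected number of busy servers is `λ/μ`,
and the expected number of idle servers is `N − λ/μ`. -/
theorem mmN_expected_busy_servers
    (N : ℕ) (hN : 1 ≤ N) (lam μ ρ : ℝ) (hlam : 0 < lam) (hμ : 0 < μ)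
    (hρ : ρ = lam / (N * μ)) (hρ₁ : ρ < 1)
    (pi : ℕ → ℝ)
    (hpi₁ : ∀ n : ℕ, n ≤ N → pi n = ((N : ℝ) * ρ) ^ n / (n.factorial : ℝ))
    (hpi₂ : ∀ n : ℕ, N < n → pi n = (N : ℝ) ^ N * ρ ^ n / (N.factorial : ℝ)) :
    Summable (fun n : ℕ => ((min n N : ℕ) : ℝ) * pi n) ∧
    (∑' n : ℕ, ((min n N : ℕ) : ℝ) * pi n) = (lam / μ) * ∑' n : ℕ, pi n ∧
    (∑' n : ℕ, ((N : ℝ) - ((min n N : ℕ) : ℝ)) * pi n) =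
      ((N : ℝ) - lam / μ) * ∑' n : ℕ, pi n := by
  have hNpos : (0:ℝ) < N := by exact_mod_cast hN
  have hρ0 : 0 < ρ := by rw [hρ]; positivity
  have hc : (N:ℝ) * ρ = lam / μ := by
    rw [hρ]; field_simp
  have hπs : Summable pi := by
    rw [← summable_nat_add_iff (N+1)]
    have he : (fun n => pi (n + (N+1))) =
        fun n => ((N:ℝ)^N / N.factorial * ρ^(N+1)) * ρ^n := by
      funext n
      rw [hpi₂ _ (by omega), pow_add]
      ring
    rw [he]
    exact (summable_geometric_of_lt_one hρ0.le hρ₁).mul_left _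
  have key : ∀ n : ℕ, ((min (n+1) N : ℕ) : ℝ) * pi (n+1) = ((N:ℝ)*ρ) * pi n := by
    intro n
    have hfac : (n.factorial : ℝ) ≠ 0 := by positivity
    have hNfac : (N.factorial : ℝ) ≠ 0 := by positivity
    rcases lt_or_ge n N with h | h
    · rw [min_eq_left h, hpi₁ (n+1) h, hpi₁ n (le_of_lt h),
        Nat.factorial_succ, pow_succ]
      push_cast
      field_simp
    · rw [min_eq_right (by omega), hpi₂ (n+1) (by omega)]
      rcases eq_or_lt_of_le h with h2 | h2
      · rw [hpi₁ n (le_of_eq h2.symm), ← h2, mul_pow, pow_succ]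
        field_simp
      · rw [hpi₂ n h2, pow_succ]
        field_simp
  have hfs : Summable (fun n => ((min n N : ℕ):ℝ) * pi n) := by
    rw [← summable_nat_add_iff 1]
    simp only [key]
    exact hπs.mul_left _
  have hsum : (∑' n : ℕ, ((min n N : ℕ):ℝ) * pi n) = (lam/μ) * ∑' n : ℕ, pi n := by
    rw [Summable.tsum_eq_zero_add hfs]
    simp only [key]
    rw [tsum_mul_left, hc]
    simp
  refine ⟨hfs, hsum, ?_⟩
  have hNs : Summable (fun n => (N:ℝ) * pi n) := hπs.mul_left _
  have he2 : (fun n : ℕ => ((N:ℝ) - ((min n N:ℕ):ℝ)) * pi n) =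
      fun n => (N:ℝ)*pi n - ((min n N:ℕ):ℝ)*pi n := by
    funext n; ring
  rw [he2, Summable.tsum_sub hNs hfs, tsum_mul_left, hsum]
  ring
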